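/- The number 4cos²(π/m) is an integer for an integer m ≥ 2 if and only if m ∈ {2, 3, 4, 6}, in which case 4cos²(π/m) equals 0, 1, 2, 3 respectively. -/

import Mathlib

open Real

lemma aux_mem (m : ℕ) (hm : 2 ≤ m) : 2 * Real.pi / m ∈ Set.Icc 0 Real.pi := by
  have hm0 : (0:ℝ) < m := by positivity
  have hm2 : (2:ℝ) ≤ m := by exact_mod_cast hm
  have hpi := Real.pi_pos
  constructor
  · positivity
  · rw [div_le_iff₀ hm0]
    nlinarith

lemma aux_eq (m c : ℕ) (hm : 2 ≤ m) (hc : 2 ≤ c)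
    (h : Real.cos (2 * Real.pi / m) = Real.cos (2 * Real.pi / c)) : m = c := by
  have h2 := Real.injOn_cos (aux_mem m hm) (aux_mem c hc) h
  have hm0 : (0:ℝ) < m := by positivity
  have hc0 : (0:ℝ) < c := by positivity
  field_simp at h2
  exact_mod_cast h2.symm

theorem stmt_2 (m : ℕ) (hm : 2 ≤ m) :
    ((∃ k : ℤ, 4 * (Real.cos (Real.pi / m)) ^ 2 = (k : ℝ)) ↔
      (m = 2 ∨ m = 3 ∨ m = 4 ∨ m = 6)) ∧
    (m = 2 → 4 * (Real.cos (Real.pi / m)) ^ 2 = 0) ∧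
    (m = 3 → 4 * (Real.cos (Real.pi / m)) ^ 2 = 1) ∧
    (m = 4 → 4 * (Real.cos (Real.pi / m)) ^ 2 = 2) ∧
    (m = 6 → 4 * (Real.cos (Real.pi / m)) ^ 2 = 3) := by
  have hm0 : (0:ℝ) < m := by positivity
  have hpi := Real.pi_pos
  have hval2 : m = 2 → 4 * (Real.cos (Real.pi / m)) ^ 2 = 0 := by
    rintro rfl; norm_num [Real.cos_pi_div_two]
  have hval3 : m = 3 → 4 * (Real.cos (Real.pi / m)) ^ 2 = 1 := by
    rintro rfl; norm_num [Real.cos_pi_div_three]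
  have hval4 : m = 4 → 4 * (Real.cos (Real.pi / m)) ^ 2 = 2 := by
    rintro rfl; norm_num [Real.cos_pi_div_four]
    rw [div_pow, Real.sq_sqrt (by norm_num : (2:ℝ) ≥ 0)]; norm_num
  have hval6 : m = 6 → 4 * (Real.cos (Real.pi / m)) ^ 2 = 3 := by
    rintro rfl
    have := Real.sq_cos_pi_div_six
    push_cast; linarith
  refine ⟨⟨?_, ?_⟩, hval2, hval3, hval4, hval6⟩
  · rintro ⟨k, hk⟩
    -- bounds on k
    have hm2 : (2:ℝ) ≤ m := by exact_mod_cast hm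
    have hcos_nonneg : 0 ≤ Real.cos (Real.pi / m) := by
      apply Real.cos_nonneg_of_mem_Icc
      constructor
      · have : (0:ℝ) ≤ Real.pi / m := by positivity
        linarith
      · rw [div_le_div_iff₀ hm0 (by norm_num : (0:ℝ) < 2)]
        nlinarith
    have hcos_lt : Real.cos (Real.pi / m) < 1 := by
      have := Real.strictAntiOn_cos (a := 0) (b := Real.pi / m)
        ⟨le_refl 0, Real.pi_pos.le⟩
        ⟨by positivity, by
          rw [div_le_iff₀ hm0]
          nlinarith⟩
        (by positivity)
      simpa [Real.cos_zero] using this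
    have hk0 : (0:ℝ) ≤ k := by rw [← hk]; positivity
    have hk4 : (k:ℝ) < 4 := by rw [← hk]; nlinarith
    have hk0' : (0:ℤ) ≤ k := by exact_mod_cast hk0
    have hk4' : k < 4 := by exact_mod_cast hk4
    -- cos (2π/m)
    have hdouble : Real.cos (2 * Real.pi / m) = (k:ℝ) / 2 - 1 := by
      rw [show 2 * Real.pi / m = 2 * (Real.pi / m) by ring, Real.cos_two_mul]
      linarith
    interval_cases k
    · left
      apply aux_eq m 2 hm (le_refl 2)
      rw [hdouble]
      norm_num [show 2 * Real.pi / (2:ℕ) = Real.pi by push_cast; ring]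
    · right; left
      apply aux_eq m 3 hm (by norm_num)
      rw [hdouble]
      have : Real.cos (2 * Real.pi / (3:ℕ)) = -(1/2) := by
        rw [show 2 * Real.pi / ((3:ℕ):ℝ) = Real.pi - Real.pi / 3 by push_cast; ring,
          Real.cos_pi_sub, Real.cos_pi_div_three]
      rw [this]; norm_num
    · right; right; left
      apply aux_eq m 4 hm (by norm_num)
      rw [hdouble]
      rw [show 2 * Real.pi / ((4:ℕ):ℝ) = Real.pi / 2 by push_cast; ring,
        Real.cos_pi_div_two]
      norm_num
    · right; right; right
      apply aux_eq m 6 hm (by norm_num)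
      rw [hdouble]
      rw [show 2 * Real.pi / ((6:ℕ):ℝ) = Real.pi / 3 by push_cast; ring,
        Real.cos_pi_div_three]
      norm_num
  · rintro (rfl | rfl | rfl | rfl)
    · exact ⟨0, by simpa using hval2 rfl⟩
    · exact ⟨1, by simpa using hval3 rfl⟩
    · exact ⟨2, by simpa using hval4 rfl⟩
    · exact ⟨3, by simpa using hval6 rfl⟩
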